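/- Let $P, Q \in \mathbb{R}^{n\times n}$ be symmetric positive definite with factorizations $P = KK^T$ and $Q = LL^T$, and let $K^T L = V\Sigma U^T$ be a singular value decomposition with $\Sigma$ invertible diagonal. Define $T = \Sigma^{-1/2} U^T L^T$ and $S = KV\Sigma^{-1/2}$. Then $TS = I$ (so $S = T^{-1}$), and $TPT^T = \Sigma = T^{-T}QT^{-1}$, i.e., the transformation $T$ simultaneously diagonalizes and equalizes the two Gramians. -/

import Mathlib

open Matrix

/-- Existence of a balancing transformation: if `P = KKᵀ`, `Q = LLᵀ`,
`KᵀL = VΣUᵀ` is an SVD with `Σ = diag σ`, `σᵢ > 0`, and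
`T = Σ^{-1/2} Uᵀ Lᵀ`, `S = K V Σ^{-1/2}`, then `TS = I`, `TPTᵀ = Σ` and `SᵀQS = Σ`
(i.e. `T⁻ᵀ Q T⁻¹ = Σ`). -/
theorem balancing_transformation_exists {n : ℕ}
    (P Q K L : Matrix (Fin n) (Fin n) ℝ) (hP : P.PosDef) (hQ : Q.PosDef)
    (hK : P = K * Kᵀ) (hL : Q = L * Lᵀ)
    (V U : Matrix (Fin n) (Fin n) ℝ)
    (hV : V * Vᵀ = 1) (hV' : Vᵀ * V = 1) (hU : U * Uᵀ = 1) (hU' : Uᵀ * U = 1)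
    (σ : Fin n → ℝ) (hσ : ∀ i, 0 < σ i)
    (hSVD : Kᵀ * L = V * Matrix.diagonal σ * Uᵀ) :
    (Matrix.diagonal (fun i => (Real.sqrt (σ i))⁻¹) * Uᵀ * Lᵀ) *
        (K * V * Matrix.diagonal (fun i => (Real.sqrt (σ i))⁻¹)) = 1 ∧
      (Matrix.diagonal (fun i => (Real.sqrt (σ i))⁻¹) * Uᵀ * Lᵀ) * P *
          (Matrix.diagonal (fun i => (Real.sqrt (σ i))⁻¹) * Uᵀ * Lᵀ)ᵀ = Matrix.diagonal σ ∧
      (K * V * Matrix.diagonal (fun i => (Real.sqrt (σ i))⁻¹))ᵀ * Q *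
          (K * V * Matrix.diagonal (fun i => (Real.sqrt (σ i))⁻¹)) = Matrix.diagonal σ := by
  subst hK hL
  set E := Matrix.diagonal (fun i => (Real.sqrt (σ i))⁻¹) with hE
  have hLK : Lᵀ * K = U * Matrix.diagonal σ * Vᵀ := by
    have := congrArg Matrix.transpose hSVD
    simpa [Matrix.transpose_mul, Matrix.mul_assoc] using this
  have hsq : ∀ i, Real.sqrt (σ i) * Real.sqrt (σ i) = σ i := fun i =>
    Real.mul_self_sqrt (hσ i).le
  have hsqne : ∀ i, Real.sqrt (σ i) ≠ 0 := fun i =>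
    (Real.sqrt_pos.mpr (hσ i)).ne'
  have hEt : Eᵀ = E := by rw [hE, Matrix.diagonal_transpose]
  have hVc : ∀ A : Matrix (Fin n) (Fin n) ℝ, Vᵀ * (V * A) = A := fun A => by
    rw [← Matrix.mul_assoc, hV', Matrix.one_mul]
  have hUc : ∀ A : Matrix (Fin n) (Fin n) ℝ, Uᵀ * (U * A) = A := fun A => by
    rw [← Matrix.mul_assoc, hU', Matrix.one_mul]
  have hEDE : E * (Matrix.diagonal σ * E) = 1 := by
    rw [hE, Matrix.diagonal_mul_diagonal, Matrix.diagonal_mul_diagonal, ← Matrix.diagonal_one]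
    exact congrArg Matrix.diagonal (funext fun i => by rw [← hsq i]; field_simp; rw [Real.sqrt_sq (Real.sqrt_nonneg _)]; exact div_self (pow_ne_zero 2 (hsqne i)))
  have hED2E : E * (Matrix.diagonal σ * (Matrix.diagonal σ * E)) = Matrix.diagonal σ := by
    rw [hE, Matrix.diagonal_mul_diagonal, Matrix.diagonal_mul_diagonal,
      Matrix.diagonal_mul_diagonal]
    exact congrArg Matrix.diagonal (funext fun i => by rw [← hsq i]; field_simp; rw [Real.sqrt_sq (Real.sqrt_nonneg _), div_eq_iff (pow_ne_zero 2 (hsqne i))]; ring)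
  refine ⟨?_, ?_, ?_⟩
  · simp only [Matrix.mul_assoc]
    rw [← Matrix.mul_assoc Lᵀ K, hLK]
    simp only [Matrix.mul_assoc, hVc, hUc]
    exact hEDE
  · simp only [Matrix.transpose_mul, Matrix.transpose_transpose, hEt, Matrix.mul_assoc]
    rw [← Matrix.mul_assoc Kᵀ L, hSVD]
    simp only [Matrix.mul_assoc]
    rw [← Matrix.mul_assoc Lᵀ K, hLK]
    simp only [Matrix.mul_assoc, hVc, hUc]
    exact hED2E
  · simp only [Matrix.transpose_mul, Matrix.transpose_transpose, hEt, Matrix.mul_assoc]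
    rw [← Matrix.mul_assoc Lᵀ K, hLK]
    simp only [Matrix.mul_assoc]
    rw [← Matrix.mul_assoc Kᵀ L, hSVD]
    simp only [Matrix.mul_assoc, hVc, hUc]
    exact hED2E
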